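/- Let V be a finite-dimensional complex vector space, F, G, μ invertible linear operators on V, S the swap operator on V ⊗ V, and R = (F ⊗ G) ∘ S. If Tr₂(R ∘ (μ ⊗ μ)) = μ, where Tr₂ denotes the partial trace over the second tensor factor, then μ F μ G = μ, and hence μ⁻¹ = G F. -/

import Mathlib

open TensorProduct

variable {V : Type*} [AddCommGroup V] [Module ℂ V]

/-- The swap operator `S : a ⊗ b ↦ b ⊗ a`. -/
noncomputable def swapOp : Module.End ℂ (V ⊗[ℂ] V) :=
  (TensorProduct.comm ℂ V V).toLinearMap

lemma swap_decomp {ι : Type*} [Fintype ι] [DecidableEq ι] (b : Module.Basis ι ℂ V) :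
    (swapOp : Module.End ℂ (V ⊗[ℂ] V)) = ∑ i, ∑ j,
      TensorProduct.map (dualTensorHom ℂ V V (b.coord j ⊗ₜ b i))
        (dualTensorHom ℂ V V (b.coord i ⊗ₜ b j)) := by
  apply TensorProduct.ext'
  intro x y
  simp only [swapOp, LinearEquiv.coe_coe, comm_tmul, LinearMap.sum_apply,
    TensorProduct.map_tmul, dualTensorHom_apply]
  calc y ⊗ₜ[ℂ] x = (∑ i, b.coord i y • b i) ⊗ₜ[ℂ] (∑ j, b.coord j x • b j) := by
        simp only [Module.Basis.coord_apply]
        rw [b.sum_repr y, b.sum_repr x]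
    _ = ∑ i, ∑ j, (b.coord j x • b i) ⊗ₜ[ℂ] (b.coord i y • b j) := by
        rw [sum_tmul]
        refine Finset.sum_congr rfl fun i _ => ?_
        rw [tmul_sum]
        refine Finset.sum_congr rfl fun j _ => ?_
        simp only [← smul_tmul', tmul_smul]
        rw [smul_comm]

lemma comp_dTH (B : Module.End ℂ V) (f : Module.Dual ℂ V) (v : V) :
    B * dualTensorHom ℂ V V (f ⊗ₜ v) = dualTensorHom ℂ V V (f ⊗ₜ B v) := by
  ext x
  simp [Module.End.mul_eq_comp, dualTensorHom_apply]

lemma sum_dTH_eq {ι : Type*} [Fintype ι] [DecidableEq ι] (b : Module.Basis ι ℂ V)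
    (B : Module.End ℂ V) :
    ∑ i, ∑ j, (b.coord i) (B (b j)) • dualTensorHom ℂ V V (b.coord j ⊗ₜ b i) = B := by
  apply b.ext
  intro k
  simp only [LinearMap.sum_apply, LinearMap.smul_apply, dualTensorHom_apply,
    Module.Basis.coord_apply, Module.Basis.repr_self, Finsupp.single_apply, smul_smul]
  rw [Finset.sum_comm]
  simp only [ite_smul, one_smul, zero_smul, mul_ite, mul_one, mul_zero]
  have h : ∀ x : ι, (∑ x_1, if k = x then (b.repr (B (b x))) x_1 • b x_1 else 0)
      = if k = x then B (b x) else 0 := fun x => by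
    split <;> simp [b.sum_repr]
  simp only [h, Finset.sum_ite_eq, Finset.mem_univ, if_true]

lemma swap_mul_map (A B : Module.End ℂ V) :
    (swapOp : Module.End ℂ (V ⊗[ℂ] V)) * TensorProduct.map A B
      = TensorProduct.map B A * swapOp := by
  apply TensorProduct.ext'
  intro x y
  simp [swapOp, Module.End.mul_eq_comp]

lemma Tr2_map_swap [FiniteDimensional ℂ V]
    (T : Module.End ℂ (V ⊗[ℂ] V) →ₗ[ℂ] Module.End ℂ V)
    (hT : ∀ A B : Module.End ℂ V,
      T (TensorProduct.map A B) = LinearMap.trace ℂ V B • A)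
    (A B : Module.End ℂ V) :
    T (TensorProduct.map A B * swapOp) = A * B := by
  classical
  let b := Module.finBasis ℂ V
  rw [swap_decomp b, Finset.mul_sum]
  simp only [Finset.mul_sum, ← TensorProduct.map_mul, map_sum, hT, comp_dTH,
    LinearMap.trace_eq_contract_apply, contractLeft_apply]
  simp only [← comp_dTH]
  calc ∑ i, ∑ j, (b.coord i) (B (b j)) • (A * dualTensorHom ℂ V V (b.coord j ⊗ₜ b i))
      = A * ∑ i, ∑ j, (b.coord i) (B (b j)) • dualTensorHom ℂ V V (b.coord j ⊗ₜ b i) := by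
        simp only [Finset.mul_sum, Finset.smul_sum, mul_smul_comm]
    _ = A * B := by rw [sum_dTH_eq]

theorem stmt6 [FiniteDimensional ℂ V] (F G μ : (Module.End ℂ V)ˣ)
    (T : Module.End ℂ (V ⊗[ℂ] V) →ₗ[ℂ] Module.End ℂ V)
    (hT : ∀ A B : Module.End ℂ V,
      T (TensorProduct.map A B) = LinearMap.trace ℂ V B • A)
    (hptr : T ((TensorProduct.map (F : Module.End ℂ V) (G : Module.End ℂ V) * swapOp) *
        TensorProduct.map (μ : Module.End ℂ V) (μ : Module.End ℂ V)) = μ) :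
    (μ : Module.End ℂ V) * F * μ * G = μ ∧
      ((μ⁻¹ : (Module.End ℂ V)ˣ) : Module.End ℂ V) = (G : Module.End ℂ V) * F := by
  have hre : (TensorProduct.map (F : Module.End ℂ V) (G : Module.End ℂ V) * swapOp) *
      TensorProduct.map (μ : Module.End ℂ V) (μ : Module.End ℂ V)
      = TensorProduct.map ((F : Module.End ℂ V) * (μ : Module.End ℂ V)) ((G : Module.End ℂ V) * (μ : Module.End ℂ V)) * swapOp := by
    rw [mul_assoc, swap_mul_map, ← mul_assoc, ← TensorProduct.map_mul]
  rw [hre, Tr2_map_swap T hT] at hptr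
  have hu : F * μ * (G * μ) = μ := Units.ext (by simp only [Units.val_mul]; exact hptr)
  rw [← mul_assoc] at hu
  have h1 : F * μ * G = 1 := by
    have h2 : F * μ * G * μ = 1 * μ := by rw [one_mul, hu]
    exact mul_right_cancel h2
  have h3 : (μ : (Module.End ℂ V)ˣ) * F * μ * G = μ := by
    calc μ * F * μ * G = μ * (F * μ * G) := by group
      _ = μ := by rw [h1, mul_one]
  have hFμ : F * μ = G⁻¹ := by
    rwa [mul_eq_one_iff_eq_inv] at h1
  have hμ : μ = F⁻¹ * G⁻¹ := by
    rw [eq_inv_mul_iff_mul_eq]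
    exact hFμ
  have h4 : μ⁻¹ = G * F := by rw [hμ]; group
  constructor
  · exact_mod_cast h3
  · exact_mod_cast h4
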